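/- Suppose J is a finite set of integers, each at least N, all of whose prime-power divisors are at most N^θ with θ < 1, and ∑_{n∈J} 1/n ≥ α > ν > 0. If N is sufficiently large in terms of α, ν, θ, then there exists a subset E ⊆ J such that ∑_{n∈E} 1/n ∈ [ν − 1/N, ν), and for every prime power q dividing some element of E, ∑_{n∈E, q|n} 1/n > min{ν, α − ν}/(5 q log log N). -/

import Mathlib

open Finset

lemma primes_log_sum (n : ℕ) :
    ∑ p ∈ (range (n+1)).filter Nat.Prime, Real.log p ≤ n * Real.log 4 := by
  have h := primorial_le_4_pow n
  have h2 : Real.log (primorial n) ≤ Real.log (4 ^ n) :=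
    Real.log_le_log (by exact_mod_cast primorial_pos n) (by exact_mod_cast h)
  rw [Real.log_pow] at h2
  calc ∑ p ∈ (range (n+1)).filter Nat.Prime, Real.log p
      = Real.log (∏ p ∈ (range (n+1)).filter Nat.Prime, (p:ℝ)) := by
        rw [Real.log_prod]
        intro p hp
        exact_mod_cast (mem_filter.1 hp).2.pos.ne'
    _ ≤ n * Real.log 4 := by
        rw [primorial] at h2
        push_cast at h2
        exact h2

lemma block_bound (j : ℕ) (hj : 1 ≤ j) :
    ∑ p ∈ (Finset.Ioc (2^j) (2^(j+1))).filter Nat.Prime, (1:ℝ)/p ≤ 4 / j := by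
  set B := (Finset.Ioc (2^j) (2^(j+1))).filter Nat.Prime with hB
  have hlog2 : (0:ℝ) < Real.log 2 := Real.log_pos (by norm_num)
  have hcard : (B.card : ℝ) * (j * Real.log 2) ≤ 2^(j+1) * Real.log 4 := by
    calc (B.card : ℝ) * (j * Real.log 2) = ∑ _p ∈ B, (j : ℝ) * Real.log 2 := by
          rw [Finset.sum_const, nsmul_eq_mul]
      _ ≤ ∑ p ∈ B, Real.log p := by
          apply Finset.sum_le_sum
          intro p hp
          have hp2 : 2^j ≤ p := le_of_lt (Finset.mem_Ioc.1 (mem_filter.1 hp).1).1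
          calc (j:ℝ) * Real.log 2 = Real.log ((2:ℝ)^j) := by rw [Real.log_pow]
            _ ≤ Real.log p := Real.log_le_log (by positivity) (by exact_mod_cast hp2)
      _ ≤ ∑ p ∈ (range (2^(j+1)+1)).filter Nat.Prime, Real.log p := by
          apply Finset.sum_le_sum_of_subset_of_nonneg
          · intro p hp
            rw [mem_filter] at hp ⊢
            exact ⟨mem_range.2 (Nat.lt_succ_of_le (Finset.mem_Ioc.1 hp.1).2), hp.2⟩
          · intro p hp _
            exact Real.log_natCast_nonneg p
      _ ≤ 2^(j+1) * Real.log 4 := by exact_mod_cast primes_log_sum (2^(j+1))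
  have hlog4 : Real.log 4 = 2 * Real.log 2 := by
    rw [show (4:ℝ) = 2^2 by norm_num, Real.log_pow]; push_cast; ring
  have hcard2 : (B.card : ℝ) ≤ 2^(j+2) / j := by
    rw [hlog4] at hcard
    rw [le_div_iff₀ (by positivity : (0:ℝ) < (j:ℕ))]
    have : (B.card : ℝ) * j * Real.log 2 ≤ 2^(j+2) * Real.log 2 := by
      calc (B.card : ℝ) * j * Real.log 2 = (B.card : ℝ) * (j * Real.log 2) := by ring
        _ ≤ 2^(j+1) * (2 * Real.log 2) := hcard
        _ = 2^(j+2) * Real.log 2 := by ring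
    exact le_of_mul_le_mul_right this hlog2
  calc ∑ p ∈ B, (1:ℝ)/p ≤ ∑ _p ∈ B, (1:ℝ)/2^j := by
        apply Finset.sum_le_sum
        intro p hp
        have hp2 : (2:ℝ)^j ≤ p := by
          exact_mod_cast le_of_lt (Finset.mem_Ioc.1 (mem_filter.1 hp).1).1
        exact one_div_le_one_div_of_le (by positivity) hp2
    _ = (B.card : ℝ) / 2^j := by rw [Finset.sum_const, nsmul_eq_mul]; ring
    _ ≤ (2^(j+2) / j) / 2^j := by
        apply div_le_div_of_nonneg_right hcard2 (by positivity)
    _ = 4 / j := by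
        rw [div_div, div_eq_div_iff (by positivity) (by positivity)]
        ring

lemma inv_sq_sum (x : ℕ) : ∑ p ∈ Finset.Ico 2 (x+1), (1:ℝ)/(p:ℝ)^2 ≤ 1 := by
  have key : ∀ p ∈ Finset.Ico 2 (x+1), (1:ℝ)/(p:ℝ)^2 ≤ 1/((p:ℝ)-1) - 1/p := by
    intro p hp
    have hp2 : 2 ≤ p := (Finset.mem_Ico.1 hp).1
    have h1 : (2:ℝ) ≤ (p:ℝ) := by exact_mod_cast hp2
    rw [div_sub_div _ _ (by linarith : (p:ℝ)-1 ≠ 0) (by positivity : (p:ℝ) ≠ 0),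
      div_le_div_iff₀ (by positivity) (by nlinarith)]
    nlinarith
  set f : ℕ → ℝ := fun i => 1/((i:ℝ)+1) with hf
  calc ∑ p ∈ Finset.Ico 2 (x+1), (1:ℝ)/(p:ℝ)^2
      ≤ ∑ p ∈ Finset.Ico 2 (x+1), ((1:ℝ)/((p:ℝ)-1) - 1/p) := Finset.sum_le_sum key
    _ = ∑ i ∈ Finset.range (x+1-2), (f i - f (i+1)) := by
        rw [Finset.sum_Ico_eq_sum_range]
        apply Finset.sum_congr rfl
        intro i _
        simp only [hf]
        push_cast
        ring_nf
    _ = f 0 - f (x+1-2) := Finset.sum_range_sub' f (x+1-2)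
    _ ≤ 1 := by
        have : 0 ≤ f (x+1-2) := by positivity
        simp only [hf]
        norm_num
        linarith

lemma geom_tail_sum (x : ℕ) : ∑ a ∈ Finset.Ico 2 (x+2), ((1:ℝ)/2)^a ≤ 1/2 := by
  set h : ℕ → ℝ := fun i => ((1:ℝ)/2)^(i+1) with hh
  calc ∑ a ∈ Finset.Ico 2 (x+2), ((1:ℝ)/2)^a
      = ∑ i ∈ Finset.range x, (h i - h (i+1)) := by
        rw [Finset.sum_Ico_eq_sum_range]
        simp only [Nat.add_sub_cancel]
        apply Finset.sum_congr rfl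
        intro i _
        simp only [hh]
        rw [pow_succ, pow_succ]
        ring
    _ = h 0 - h x := Finset.sum_range_sub' h x
    _ ≤ 1/2 := by
        have : 0 ≤ h x := by positivity
        have h0 : h 0 = 1/2 := by simp [hh]
        linarith

lemma nonprime_pp_sum (x : ℕ) :
    ∑ q ∈ (range (x+1)).filter (fun q => IsPrimePow q ∧ ¬ q.Prime), (1:ℝ)/q ≤ 2 := by
  classical
  set S := (range (x+1)).filter (fun q => IsPrimePow q ∧ ¬ q.Prime) with hS
  set φ : ℕ → ℕ × ℕ := fun q => (q.minFac, q.factorization q.minFac) with hφ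
  set F : ℕ × ℕ → ℝ := fun pa => 4 * ((1:ℝ)/((pa.1:ℝ))^2 * ((1:ℝ)/2)^pa.2) with hF
  have hfacts : ∀ q ∈ S, (q.minFac).Prime ∧ 2 ≤ q.factorization q.minFac ∧
      q.minFac ^ (q.factorization q.minFac) = q := by
    intro q hq
    rw [hS, mem_filter] at hq
    obtain ⟨hqr, hpp, hnp⟩ := hq
    have hne1 : q ≠ 1 := hpp.ne_one
    have hp : (q.minFac).Prime := Nat.minFac_prime hne1
    have hqe : q.minFac ^ (q.factorization q.minFac) = q :=
      hpp.minFac_pow_factorization_eq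
    refine ⟨hp, ?_, hqe⟩
    rcases Nat.lt_or_ge (q.factorization q.minFac) 2 with h | h
    · interval_cases h' : (q.factorization q.minFac)
      · exfalso; rw [pow_zero] at hqe; exact hne1 hqe.symm
      · exfalso; rw [pow_one] at hqe; exact hnp (hqe ▸ hp)
    · exact h
  have hmem : ∀ q ∈ S, φ q ∈ Finset.Ico 2 (x+1) ×ˢ Finset.Ico 2 (x+2) := by
    intro q hq
    obtain ⟨hp, ha, hqe⟩ := hfacts q hq
    have hqx : q ≤ x := by
      have := (mem_filter.1 hq).1; rw [mem_range] at this; omega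
    have hq0 : 0 < q := by
      rcases Nat.eq_zero_or_pos q with h | h
      · exfalso; have := (mem_filter.1 hq).2.1; rw [h] at this; exact not_isPrimePow_zero this
      · exact h
    have hpq : q.minFac ≤ q := Nat.minFac_le hq0
    have haq : q.factorization q.minFac ≤ x := by
      have h1 : q.factorization q.minFac < 2 ^ (q.factorization q.minFac) :=
        Nat.lt_two_pow_self
      have h2 : 2 ^ (q.factorization q.minFac) ≤ q.minFac ^ (q.factorization q.minFac) :=
        Nat.pow_le_pow_left hp.two_le _
      omega
    simp only [φ, Finset.mem_product, Finset.mem_Ico]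
    exact ⟨⟨hp.two_le, by omega⟩, ⟨ha, by omega⟩⟩
  have hpoint : ∀ q ∈ S, (1:ℝ)/q ≤ F (φ q) := by
    intro q hq
    obtain ⟨hp, ha, hqe⟩ := hfacts q hq
    set p := q.minFac
    set a := q.factorization q.minFac
    have hkey : (p:ℝ)^2 * 2^(a-2) ≤ (q:ℝ) := by
      have h1 : p^2 * 2^(a-2) ≤ p^2 * p^(a-2) :=
        Nat.mul_le_mul_left _ (Nat.pow_le_pow_left hp.two_le _)
      have h2 : p^2 * p^(a-2) = p^a := by
        rw [← pow_add]; congr 1; omega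
      have : p^2 * 2^(a-2) ≤ q := by rw [← hqe]; omega
      exact_mod_cast this
    have hq0 : (0:ℝ) < (p:ℝ)^2 * 2^(a-2) := by
      have := hp.two_le; positivity
    have h1q : (1:ℝ)/q ≤ 1/((p:ℝ)^2 * 2^(a-2)) :=
      one_div_le_one_div_of_le hq0 hkey
    refine h1q.trans (le_of_eq ?_)
    simp only [hF]
    rw [one_div, mul_inv, div_pow, one_pow, ← Real.rpow_natCast (2:ℝ) (a-2)]
    rw [show ((a:ℕ) - 2 : ℕ) = a - 2 from rfl]
    have hcast : ((a - 2 : ℕ) : ℝ) = (a:ℝ) - 2 := by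
      have : (2:ℕ) ≤ a := ha; push_cast [Nat.cast_sub this]; ring
    rw [hcast]
    rw [Real.rpow_sub (by norm_num) (a:ℝ) 2]
    rw [Real.rpow_natCast, Real.rpow_two]
    field_simp
    ring
  have hinj : ∀ q₁ ∈ S, ∀ q₂ ∈ S, φ q₁ = φ q₂ → q₁ = q₂ := by
    intro q₁ h₁ q₂ h₂ heq
    obtain ⟨_, _, he₁⟩ := hfacts q₁ h₁
    obtain ⟨_, _, he₂⟩ := hfacts q₂ h₂
    have h1 : (φ q₁).1 ^ (φ q₁).2 = q₁ := he₁
    have h2 : (φ q₂).1 ^ (φ q₂).2 = q₂ := he₂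
    rw [← h1, ← h2, heq]
  have hFnn : ∀ y : ℕ × ℕ, 0 ≤ F y := by
    intro y; simp only [hF]; positivity
  calc ∑ q ∈ S, (1:ℝ)/q ≤ ∑ q ∈ S, F (φ q) := Finset.sum_le_sum hpoint
    _ = ∑ y ∈ S.image φ, F y := (Finset.sum_image hinj).symm
    _ ≤ ∑ y ∈ Finset.Ico 2 (x+1) ×ˢ Finset.Ico 2 (x+2), F y := by
        apply Finset.sum_le_sum_of_subset_of_nonneg
        · intro y hy
          obtain ⟨q, hq, rfl⟩ := Finset.mem_image.1 hy
          exact hmem q hq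
        · intro y _ _; exact hFnn y
    _ = 4 * ((∑ p ∈ Finset.Ico 2 (x+1), (1:ℝ)/((p:ℝ))^2) *
          (∑ a ∈ Finset.Ico 2 (x+2), ((1:ℝ)/2)^a)) := by
        rw [Finset.sum_product, Finset.sum_mul_sum, Finset.mul_sum]
        refine Finset.sum_congr rfl fun p _ => ?_
        rw [Finset.mul_sum]
    _ ≤ 4 * (1 * (1/2)) := by
        have h1 := inv_sq_sum x
        have h2 := geom_tail_sum x
        have hnn : 0 ≤ ∑ a ∈ Finset.Ico 2 (x+2), ((1:ℝ)/2)^a :=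
          Finset.sum_nonneg (fun a _ => by positivity)
        have hnn2 : 0 ≤ ∑ p ∈ Finset.Ico 2 (x+1), (1:ℝ)/((p:ℝ))^2 :=
          Finset.sum_nonneg (fun p _ => by positivity)
        nlinarith
    _ = 2 := by norm_num

lemma prime_recip_sum (x : ℕ) (hx : 4 ≤ x) :
    ∑ p ∈ (range (x+1)).filter Nat.Prime, (1:ℝ)/p ≤ 9 + 4 * Real.log (Real.log x) := by
  classical
  set J := Nat.log 2 x with hJ
  have hx0 : x ≠ 0 := by omega
  have hJ2 : 2 ≤ J := by
    rw [hJ, Nat.le_log_iff_pow_le one_lt_two hx0]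
    omega
  set B : ℕ → Finset ℕ := fun j => (Finset.Ioc (2^j) (2^(j+1))).filter Nat.Prime with hB
  have hcover : (range (x+1)).filter Nat.Prime ⊆
      insert 2 ((Finset.Icc 1 J).biUnion B) := by
    intro p hp
    rw [mem_filter, mem_range] at hp
    obtain ⟨hpx, hpp⟩ := hp
    by_cases hp2 : p = 2
    · exact Finset.mem_insert.2 (Or.inl hp2)
    apply Finset.mem_insert.2
    right
    set j := Nat.log 2 p with hj
    have hp0 : p ≠ 0 := hpp.pos.ne'
    have h1 : 2^j ≤ p := Nat.pow_log_le_self 2 hp0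
    have h2 : p < 2^(j+1) := Nat.lt_pow_succ_log_self one_lt_two p
    have hj1 : 1 ≤ j := by
      rw [hj, Nat.le_log_iff_pow_le one_lt_two hp0]
      exact hpp.two_le
    have hjJ : j ≤ J := Nat.log_mono_right (by omega)
    have hne : p ≠ 2^j := by
      intro he
      have : 2 ∣ p := he ▸ dvd_pow_self 2 (by omega : j ≠ 0)
      exact hp2 ((Nat.Prime.eq_one_or_self_of_dvd hpp 2 this).resolve_left (by norm_num)).symm
    refine Finset.mem_biUnion.2 ⟨j, Finset.mem_Icc.2 ⟨hj1, hjJ⟩, ?_⟩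
    rw [hB]
    exact mem_filter.2 ⟨Finset.mem_Ioc.2 ⟨by omega, by omega⟩, hpp⟩
  have hdisj : (↑(Finset.Icc 1 J) : Set ℕ).PairwiseDisjoint B := by
    intro i hi j hj hij
    rcases Nat.lt_or_ge i j with h | h
    · apply Finset.disjoint_left.2
      intro p hpi hpj
      rw [hB, mem_filter, Finset.mem_Ioc] at hpi hpj
      have : 2^(i+1) ≤ 2^j := Nat.pow_le_pow_right (by norm_num) (by omega)
      omega
    · have h' : j < i := by omega
      apply Finset.disjoint_left.2
      intro p hpi hpj
      rw [hB, mem_filter, Finset.mem_Ioc] at hpi hpj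
      have : 2^(j+1) ≤ 2^i := Nat.pow_le_pow_right (by norm_num) (by omega)
      omega
  have hlog2 : (0.6931471803:ℝ) < Real.log 2 := Real.log_two_gt_d9
  have hlogx1 : (1:ℝ) < Real.log x := by
    have h4 : (4:ℝ) ≤ (x:ℝ) := by exact_mod_cast hx
    have : Real.log 4 ≤ Real.log x := Real.log_le_log (by norm_num) h4
    have h44 : Real.log 4 = 2 * Real.log 2 := by
      rw [show (4:ℝ) = 2^2 by norm_num, Real.log_pow]; push_cast; ring
    linarith
  have hJle : (J:ℝ) ≤ 2 * Real.log x := by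
    have h2J : (2:ℕ)^J ≤ x := Nat.pow_log_le_self 2 hx0
    have : (J:ℝ) * Real.log 2 ≤ Real.log x := by
      calc (J:ℝ) * Real.log 2 = Real.log ((2:ℝ)^J) := by rw [Real.log_pow]
        _ ≤ Real.log x := Real.log_le_log (by positivity) (by exact_mod_cast h2J)
    nlinarith
  have hlogJ : Real.log J ≤ 1 + Real.log (Real.log x) := by
    have hJpos : (0:ℝ) < (J:ℝ) := by exact_mod_cast (by omega : 0 < J)
    calc Real.log J ≤ Real.log (2 * Real.log x) := Real.log_le_log hJpos hJle
      _ = Real.log 2 + Real.log (Real.log x) := Real.log_mul (by norm_num) (by linarith)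
      _ ≤ 1 + Real.log (Real.log x) := by
          have := Real.log_two_lt_d9
          linarith
  calc ∑ p ∈ (range (x+1)).filter Nat.Prime, (1:ℝ)/p
      ≤ ∑ p ∈ insert 2 ((Finset.Icc 1 J).biUnion B), (1:ℝ)/p := by
        apply Finset.sum_le_sum_of_subset_of_nonneg hcover
        intro p _ _; positivity
    _ = 1/2 + ∑ p ∈ (Finset.Icc 1 J).biUnion B, (1:ℝ)/p := by
        rw [Finset.sum_insert]
        · norm_num
        · intro h
          obtain ⟨j, hj, hmem⟩ := Finset.mem_biUnion.1 h
          rw [hB, mem_filter, Finset.mem_Ioc] at hmem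
          have hj1 : 1 ≤ j := (Finset.mem_Icc.1 hj).1
          have : 2^1 ≤ 2^j := Nat.pow_le_pow_right (by norm_num) hj1
          omega
    _ = 1/2 + ∑ j ∈ Finset.Icc 1 J, ∑ p ∈ B j, (1:ℝ)/p := by
        rw [Finset.sum_biUnion hdisj]
    _ ≤ 1/2 + ∑ j ∈ Finset.Icc 1 J, 4/(j:ℝ) := by
        apply add_le_add le_rfl
        apply Finset.sum_le_sum
        intro j hj
        exact block_bound j (Finset.mem_Icc.1 hj).1
    _ = 1/2 + 4 * ∑ j ∈ Finset.Icc 1 J, (j:ℝ)⁻¹ := by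
        rw [Finset.mul_sum]
        congr 1
    _ ≤ 1/2 + 4 * (1 + Real.log J) := by
        have hh : ∑ j ∈ Finset.Icc 1 J, (j:ℝ)⁻¹ = ((harmonic J : ℚ) : ℝ) := by
          rw [harmonic_eq_sum_Icc]
          push_cast
          rfl
        rw [hh]
        have := harmonic_le_one_add_log J
        linarith
    _ ≤ 9 + 4 * Real.log (Real.log x) := by linarith

lemma pp_recip_sum (x : ℕ) :
    ∑ q ∈ (range (x+1)).filter IsPrimePow, (1:ℝ)/q ≤
      12 + 4 * Real.log (Real.log (x+16)) := by
  classical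
  have hlog16 : (1:ℝ) ≤ Real.log ((x:ℝ)+16) := by
    have h1 : Real.log 16 ≤ Real.log ((x:ℝ)+16) :=
      Real.log_le_log (by norm_num) (le_add_of_nonneg_left (Nat.cast_nonneg x))
    have h2 : Real.log 16 = 4 * Real.log 2 := by
      rw [show (16:ℝ) = 2^4 by norm_num, Real.log_pow]; push_cast; ring
    have := Real.log_two_gt_d9
    linarith
  have hll : (0:ℝ) ≤ Real.log (Real.log ((x:ℝ)+16)) :=
    Real.log_nonneg hlog16
  rcases Nat.lt_or_ge x 4 with hx | hx
  · calc ∑ q ∈ (range (x+1)).filter IsPrimePow, (1:ℝ)/q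
        ≤ ∑ _q ∈ (range (x+1)).filter IsPrimePow, (1:ℝ) := by
          apply Finset.sum_le_sum
          intro q hq
          have h2 : 2 ≤ q := ((mem_filter.1 hq).2 : IsPrimePow q).two_le
          have h2r : (2:ℝ) ≤ (q:ℝ) := by exact_mod_cast h2
          rw [div_le_one (by linarith)]
          linarith
      _ = ((range (x+1)).filter IsPrimePow).card := by rw [Finset.sum_const]; simp
      _ ≤ 12 + 4 * Real.log (Real.log (x+16)) := by
          have : ((range (x+1)).filter IsPrimePow).card ≤ x+1 :=
            (Finset.card_filter_le _ _).trans (by rw [Finset.card_range])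
          have hc : (((range (x+1)).filter IsPrimePow).card : ℝ) ≤ 5 := by
            exact_mod_cast this.trans (by omega)
          push_cast
          linarith
  · have hsplit := Finset.sum_filter_add_sum_filter_not
      ((range (x+1)).filter IsPrimePow) Nat.Prime (fun q => (1:ℝ)/q)
    have h1 : ∑ q ∈ ((range (x+1)).filter IsPrimePow).filter Nat.Prime, (1:ℝ)/q ≤
        9 + 4 * Real.log (Real.log x) := by
      refine le_trans ?_ (prime_recip_sum x hx)
      apply Finset.sum_le_sum_of_subset_of_nonneg
      · intro q hq
        rw [mem_filter] at hq ⊢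
        exact ⟨(mem_filter.1 hq.1).1, hq.2⟩
      · intro q _ _; positivity
    have h2 : ∑ q ∈ ((range (x+1)).filter IsPrimePow).filter (fun q => ¬ q.Prime), (1:ℝ)/q ≤ 2 := by
      refine le_trans (le_of_eq ?_) (nonprime_pp_sum x)
      rw [Finset.filter_filter]
    have hmono : Real.log (Real.log x) ≤ Real.log (Real.log ((x:ℝ)+16)) := by
      have hx4 : (4:ℝ) ≤ (x:ℝ) := by exact_mod_cast hx
      have hlx : (1:ℝ) < Real.log x := by
        have : Real.log 4 ≤ Real.log x := Real.log_le_log (by norm_num) hx4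
        have h44 : Real.log 4 = 2 * Real.log 2 := by
          rw [show (4:ℝ) = 2^2 by norm_num, Real.log_pow]; push_cast; ring
        have := Real.log_two_gt_d9
        linarith
      apply Real.log_le_log (by linarith)
      exact Real.log_le_log (by linarith) (by linarith)
    calc ∑ q ∈ (range (x+1)).filter IsPrimePow, (1:ℝ)/q
        = _ + _ := hsplit.symm
      _ ≤ (9 + 4 * Real.log (Real.log x)) + 2 := add_le_add h1 h2
      _ ≤ 12 + 4 * Real.log (Real.log (x+16)) := by push_cast; linarith

noncomputable def rsum (F : Finset ℕ) : ℝ := ∑ n ∈ F, (1:ℝ)/n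

noncomputable def qsum (q : ℕ) (F : Finset ℕ) : ℝ :=
  ∑ n ∈ F.filter (fun n => q ∣ n), (1:ℝ)/n

def Qset (F : Finset ℕ) : Finset ℕ := (F.biUnion Nat.divisors).filter IsPrimePow

def good (ρ : ℕ → ℝ) (F : Finset ℕ) : Prop := ∀ q ∈ Qset F, ρ q < qsum q F

lemma mem_Qset {q : ℕ} {F : Finset ℕ} :
    q ∈ Qset F ↔ IsPrimePow q ∧ ∃ n ∈ F, q ∣ n ∧ n ≠ 0 := by
  simp only [Qset, Finset.mem_filter, Finset.mem_biUnion, Nat.mem_divisors]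
  tauto

lemma Qset_mono {F G : Finset ℕ} (h : F ⊆ G) : Qset F ⊆ Qset G := by
  intro q hq
  rw [mem_Qset] at hq ⊢
  obtain ⟨h1, n, hn, h2⟩ := hq
  exact ⟨h1, n, h hn, h2⟩

lemma qsum_nonneg (q : ℕ) (F : Finset ℕ) : 0 ≤ qsum q F :=
  Finset.sum_nonneg fun n _ => by positivity

lemma filterStep (ρ : ℕ → ℝ) (hρ : ∀ q, 0 ≤ ρ q) :
    ∀ (k : ℕ) (F : Finset ℕ), F.card ≤ k →
    ∃ F', F' ⊆ F ∧ good ρ F' ∧ rsum F - rsum F' ≤ ∑ q ∈ Qset F \ Qset F', ρ q := by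
  classical
  intro k
  induction k with
  | zero =>
    intro F hF
    have : F = ∅ := Finset.card_eq_zero.1 (Nat.le_zero.1 hF)
    subst this
    refine ⟨∅, Finset.Subset.refl _, ?_, by simp⟩
    intro q hq
    rw [mem_Qset] at hq
    obtain ⟨_, n, hn, _⟩ := hq
    exact absurd hn (Finset.notMem_empty n)
  | succ k ih =>
    intro F hF
    by_cases hg : good ρ F
    · refine ⟨F, Finset.Subset.refl _, hg, ?_⟩
      simp only [sub_self]
      exact Finset.sum_nonneg fun q _ => hρ q
    · rw [good] at hg
      push_neg at hg
      obtain ⟨q₀, hq₀, hq₀s⟩ := hg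
      set G := F.filter (fun n => ¬ q₀ ∣ n) with hG
      obtain ⟨hq₀pp, n₀, hn₀F, hn₀d, hn₀0⟩ := mem_Qset.1 hq₀
      have hGF : G ⊆ F := Finset.filter_subset _ _
      have hn₀G : n₀ ∉ G := by
        rw [hG, Finset.mem_filter]
        push_neg
        intro _
        simpa using hn₀d
      have hGcard : G.card ≤ k := by
        have : G.card < F.card := Finset.card_lt_card ⟨hGF, fun hsub => hn₀G (hsub hn₀F)⟩
        omega
      obtain ⟨F', hF'G, hF'good, hF'bound⟩ := ih G hGcard
      have hq₀G : q₀ ∉ Qset G := by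
        intro h
        rw [mem_Qset] at h
        obtain ⟨_, n, hn, hd, _⟩ := h
        rw [hG, Finset.mem_filter] at hn
        exact hn.2 hd
      have hq₀F' : q₀ ∉ Qset F' := fun h => hq₀G (Qset_mono hF'G h)
      have hsplit : rsum F = qsum q₀ F + rsum G := by
        rw [rsum, qsum, hG, ← Finset.sum_filter_add_sum_filter_not F (fun n => q₀ ∣ n)]
        rfl
      refine ⟨F', hF'G.trans hGF, hF'good, ?_⟩
      have hsub : insert q₀ (Qset G \ Qset F') ⊆ Qset F \ Qset F' := by
        intro q hq
        rcases Finset.mem_insert.1 hq with rfl | hq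
        · exact Finset.mem_sdiff.2 ⟨hq₀, hq₀F'⟩
        · rw [Finset.mem_sdiff] at hq ⊢
          exact ⟨Qset_mono hGF hq.1, hq.2⟩
      calc rsum F - rsum F' = qsum q₀ F + (rsum G - rsum F') := by rw [hsplit]; ring
        _ ≤ ρ q₀ + ∑ q ∈ Qset G \ Qset F', ρ q := add_le_add hq₀s hF'bound
        _ = ∑ q ∈ insert q₀ (Qset G \ Qset F'), ρ q := by
            rw [Finset.sum_insert (fun h => hq₀G (Finset.mem_sdiff.1 h).1)]
        _ ≤ ∑ q ∈ Qset F \ Qset F', ρ q :=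
            Finset.sum_le_sum_of_subset_of_nonneg hsub (fun q _ _ => hρ q)

lemma exists_good_erase (ρ : ℕ → ℝ) (ν : ℝ) (N : ℕ) (J PP F : Finset ℕ)
    (hFJ : F ⊆ J) (hN : 0 < N) (hJN : ∀ n ∈ J, N ≤ n)
    (hPP : ∀ n ∈ J, ∀ q, IsPrimePow q → q ∣ n → q ∈ PP)
    (hρ : ∀ q, 0 ≤ ρ q)
    (hbound : ∑ q ∈ PP, ρ q + (PP.card : ℝ)/N < ν)
    (hgood : good ρ F) (hν : ν ≤ rsum F) :
    ∃ n ∈ F, good ρ (F.erase n) := by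
  classical
  by_contra hcon
  push_neg at hcon
  have hch : ∀ n ∈ F, ∃ q, q ∈ PP ∧ q ∣ n ∧ qsum q F ≤ ρ q + 1/N := by
    intro n hn
    have h := hcon n hn
    rw [good] at h
    push_neg at h
    obtain ⟨q, hq, hqs⟩ := h
    have hqF : q ∈ Qset F := Qset_mono (Finset.erase_subset n F) hq
    obtain ⟨hqpp, m, hm, hmd, _⟩ := mem_Qset.1 hqF
    have hqd : q ∣ n := by
      by_contra hnd
      have : (F.erase n).filter (fun m => q ∣ m) = F.filter (fun m => q ∣ m) := by
        rw [Finset.filter_erase]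
        apply Finset.erase_eq_of_notMem
        rw [Finset.mem_filter]
        tauto
      have heq : qsum q (F.erase n) = qsum q F := by rw [qsum, qsum, this]
      exact absurd (hgood q hqF) (not_lt.2 (heq ▸ hqs))
    refine ⟨q, hPP n (hFJ hn) q (mem_Qset.1 hq).1 hqd, hqd, ?_⟩
    have hnN : N ≤ n := hJN n (hFJ hn)
    have h1n : (1:ℝ)/n ≤ 1/N := by
      apply one_div_le_one_div_of_le (by exact_mod_cast hN)
      exact_mod_cast hnN
    have hsplit : qsum q F = 1/(n:ℝ) + qsum q (F.erase n) := by
      rw [qsum, qsum, Finset.filter_erase, ← Finset.add_sum_erase]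
      rw [Finset.mem_filter]
      exact ⟨hn, hqd⟩
    rw [hsplit]
    linarith
  choose! g hg1 hg2 hg3 using hch
  set C := F.image g with hC
  have hCPP : C ⊆ PP := by
    intro q hq
    obtain ⟨n, hn, rfl⟩ := Finset.mem_image.1 hq
    exact hg1 n hn
  have hkey : rsum F ≤ ∑ q ∈ C, qsum q F := by
    have hrw : ∀ q, qsum q F = ∑ n ∈ F, (if q ∣ n then (1:ℝ)/n else 0) := by
      intro q
      rw [qsum, Finset.sum_filter]
    calc rsum F = ∑ n ∈ F, (1:ℝ)/n := rfl
      _ ≤ ∑ n ∈ F, ∑ q ∈ C, (if q ∣ n then (1:ℝ)/n else 0) := by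
          apply Finset.sum_le_sum
          intro n hn
          have hmem : g n ∈ C := Finset.mem_image_of_mem g hn
          have hs := Finset.single_le_sum
            (f := fun q => if q ∣ n then (1:ℝ)/n else 0)
            (fun q _ => by split <;> positivity) hmem
          rw [if_pos (hg2 n hn)] at hs
          exact hs
      _ = ∑ q ∈ C, qsum q F := by
          rw [Finset.sum_comm]
          exact Finset.sum_congr rfl fun q _ => (hrw q).symm
  have hCsum : ∑ q ∈ C, qsum q F ≤ ∑ q ∈ C, (ρ q + 1/N) := by
    apply Finset.sum_le_sum
    intro q hq
    obtain ⟨n, hn, rfl⟩ := Finset.mem_image.1 hq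
    exact hg3 n hn
  have hfin : ∑ q ∈ C, (ρ q + 1/N) ≤ ∑ q ∈ PP, ρ q + (PP.card : ℝ)/N := by
    rw [Finset.sum_add_distrib, Finset.sum_const, nsmul_eq_mul]
    have h1 : ∑ q ∈ C, ρ q ≤ ∑ q ∈ PP, ρ q :=
      Finset.sum_le_sum_of_subset_of_nonneg hCPP (fun q _ _ => hρ q)
    have h2 : (C.card : ℝ) * (1/N) ≤ (PP.card : ℝ)/N := by
      rw [mul_one_div]
      apply div_le_div_of_nonneg_right ?_ (by positivity)
      exact_mod_cast Finset.card_le_card hCPP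
    linarith
  linarith

lemma good_trim (ρ : ℕ → ℝ) (ν : ℝ) (N : ℕ) (J PP : Finset ℕ)
    (hν0 : 0 < ν) (hN : 0 < N) (hJN : ∀ n ∈ J, N ≤ n)
    (hPP : ∀ n ∈ J, ∀ q, IsPrimePow q → q ∣ n → q ∈ PP)
    (hρ : ∀ q, 0 ≤ ρ q)
    (hbound : ∑ q ∈ PP, ρ q + (PP.card : ℝ)/N < ν) :
    ∀ (k : ℕ) (F : Finset ℕ), F.card ≤ k → F ⊆ J → good ρ F → ν ≤ rsum F →
    ∃ E, E ⊆ F ∧ good ρ E ∧ ν - 1/N ≤ rsum E ∧ rsum E < ν := by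
  classical
  intro k
  induction k with
  | zero =>
    intro F hF _ _ hν
    exfalso
    have : F = ∅ := Finset.card_eq_zero.1 (Nat.le_zero.1 hF)
    rw [this] at hν
    have : rsum (∅ : Finset ℕ) = 0 := Finset.sum_empty
    linarith
  | succ k ih =>
    intro F hF hFJ hgood hν
    obtain ⟨n, hn, hgood'⟩ :=
      exists_good_erase ρ ν N J PP F hFJ hN hJN hPP hρ hbound hgood hν
    have hnN : N ≤ n := hJN n (hFJ hn)
    have h1n : (1:ℝ)/n ≤ 1/N := by
      apply one_div_le_one_div_of_le (by exact_mod_cast hN)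
      exact_mod_cast hnN
    have hsplit : rsum F = 1/(n:ℝ) + rsum (F.erase n) := by
      rw [rsum, rsum, ← Finset.add_sum_erase F _ hn]
    by_cases hlt : rsum (F.erase n) < ν
    · refine ⟨F.erase n, Finset.erase_subset n F, hgood', ?_, hlt⟩
      linarith
    · push_neg at hlt
      have hcard : (F.erase n).card ≤ k := by
        have := Finset.card_erase_of_mem hn
        have hpos : 0 < F.card := Finset.card_pos.2 ⟨n, hn⟩
        omega
      obtain ⟨E, hE1, hE2, hE3, hE4⟩ :=
        ih (F.erase n) hcard ((Finset.erase_subset n F).trans hFJ) hgood' hlt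
      exact ⟨E, hE1.trans (Finset.erase_subset n F), hE2, hE3, hE4⟩

/-- Proposition 2: if `J` is a finite set of integers `≥ N` all of whose prime-power
divisors are `≤ N^θ` with `θ < 1`, and `∑_{n∈J} 1/n ≥ α > ν > 0`, then for `N` large
in terms of `α, ν, θ` there is `E ⊆ J` with `∑_{n∈E} 1/n ∈ [ν - 1/N, ν)` and, for
every prime power `q` dividing an element of `E`,
`∑_{n∈E, q∣n} 1/n > min(ν, α-ν)/(5q log log N)`. -/
theorem stmt_10 (α ν θ : ℝ) (hν : 0 < ν) (hαν : ν < α) (hθ : θ < 1) :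
    ∃ N₀ : ℕ, ∀ N : ℕ, N₀ ≤ N → ∀ J : Finset ℕ,
      (∀ n ∈ J, N ≤ n) →
      (∀ n ∈ J, ∀ q : ℕ, IsPrimePow q → q ∣ n → (q : ℝ) ≤ (N : ℝ) ^ θ) →
      α ≤ (∑ n ∈ J, (1 : ℝ) / n) →
      ∃ E ⊆ J,
        (ν - 1 / N ≤ (∑ n ∈ E, (1 : ℝ) / n) ∧ (∑ n ∈ E, (1 : ℝ) / n) < ν) ∧
        ∀ q : ℕ, IsPrimePow q → (∃ n ∈ E, q ∣ n) →
          min ν (α - ν) / (5 * q * Real.log (Real.log N)) <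
            ∑ n ∈ E.filter (q ∣ ·), (1 : ℝ) / n := by
  classical
  set c := min ν (α - ν) with hc
  have hc0 : 0 < c := lt_min hν (by linarith)
  have hcν : c ≤ ν := min_le_left _ _
  have hcαν : c ≤ α - ν := min_le_right _ _
  -- eventual largeness conditions
  have hLL : Filter.Tendsto (fun N : ℕ => Real.log (Real.log N)) Filter.atTop Filter.atTop :=
    (Real.tendsto_log_atTop.comp Real.tendsto_log_atTop).comp
      tendsto_natCast_atTop_atTop
  have e1 : ∀ᶠ N : ℕ in Filter.atTop, 24 ≤ Real.log (Real.log N) :=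
    hLL.eventually_ge_atTop 24
  have hrp : Filter.Tendsto (fun N : ℕ => ((N:ℝ))^(θ-1)) Filter.atTop (nhds 0) := by
    have h := tendsto_rpow_neg_atTop (by linarith : 0 < 1 - θ)
    have h2 := h.comp (tendsto_natCast_atTop_atTop (R := ℝ))
    convert h2 using 2 with N
    simp [neg_sub]
  have e2 : ∀ᶠ N : ℕ in Filter.atTop, ((N:ℝ))^(θ-1) < min (ν/40) (1/4) :=
    hrp.eventually_lt_const (by positivity)
  have e3 : ∀ᶠ N : ℕ in Filter.atTop, (1:ℝ)/N < ν/40 := by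
    have := tendsto_one_div_atTop_nhds_zero_nat (𝕜 := ℝ)
    exact this.eventually_lt_const (by positivity)
  have e4 : ∀ᶠ N : ℕ in Filter.atTop, 32 ≤ N := Filter.eventually_ge_atTop 32
  obtain ⟨N₀, hN₀⟩ := Filter.eventually_atTop.1 (((e1.and e2).and e3).and e4)
  refine ⟨N₀, fun N hN J hJN hJθ hJα => ?_⟩
  obtain ⟨⟨⟨hL24, hrpN⟩, h1N⟩, hN32⟩ := hN₀ N hN
  set L := Real.log (Real.log N) with hLdef
  have hL0 : 0 < L := by linarith
  have hN0 : 0 < N := by omega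
  have hN0r : (0:ℝ) < N := by exact_mod_cast hN0
  set M := ⌊(N:ℝ)^θ⌋₊ with hM
  set PP := (range (M+1)).filter IsPrimePow with hPP
  set ρ : ℕ → ℝ := fun q => c / (5*(q:ℝ)*L) with hρdef
  have hρ0 : ∀ q, 0 ≤ ρ q := by
    intro q
    apply div_nonneg hc0.le
    positivity
  have hPPmem : ∀ n ∈ J, ∀ q, IsPrimePow q → q ∣ n → q ∈ PP := by
    intro n hn q hq hd
    rw [hPP, mem_filter, mem_range]
    refine ⟨?_, hq⟩
    have : q ≤ M := Nat.le_floor (hJθ n hn q hq hd)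
    omega
  -- the total budget
  have hNθN : (N:ℝ)^θ + 16 ≤ N := by
    have h1 : ((N:ℝ))^(θ-1) ≤ 1/4 := (hrpN.trans_le (min_le_right _ _)).le
    have h2 : (N:ℝ)^θ = ((N:ℝ))^(θ-1) * N := by
      rw [Real.rpow_sub hN0r, Real.rpow_one]
      field_simp
    have h32 : (32:ℝ) ≤ N := by exact_mod_cast hN32
    nlinarith
  have hMsum : ∑ q ∈ PP, (1:ℝ)/q ≤ (4.5:ℝ) * L := by
    have h1 := pp_recip_sum M
    have hfloor : (M:ℝ) ≤ (N:ℝ)^θ := Nat.floor_le (Real.rpow_nonneg hN0r.le θ)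
    have hlogmono : Real.log (Real.log ((M:ℝ)+16)) ≤ L := by
      have hm16 : (16:ℝ) ≤ (M:ℝ)+16 := le_add_of_nonneg_left (Nat.cast_nonneg M)
      have hlog1 : (1:ℝ) ≤ Real.log ((M:ℝ)+16) := by
        have h2 : Real.log 16 = 4 * Real.log 2 := by
          rw [show (16:ℝ) = 2^4 by norm_num, Real.log_pow]; push_cast; ring
        have h3 : Real.log 16 ≤ Real.log ((M:ℝ)+16) :=
          Real.log_le_log (by norm_num) hm16
        have := Real.log_two_gt_d9
        linarith
      rw [hLdef]
      apply Real.log_le_log (by linarith)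
      apply Real.log_le_log (by linarith)
      linarith
    calc ∑ q ∈ PP, (1:ℝ)/q ≤ 12 + 4 * Real.log (Real.log ((M:ℝ)+16)) := h1
      _ ≤ 12 + 4 * L := by linarith
      _ ≤ 4.5 * L := by linarith
  have hsumρ : ∑ q ∈ PP, ρ q ≤ 0.9 * c := by
    have hterm : ∀ q ∈ PP, ρ q = c/(5*L) * (1/(q:ℝ)) := by
      intro q hq
      have hq2 : 2 ≤ q := ((mem_filter.1 hq).2 : IsPrimePow q).two_le
      have hq0 : ((q:ℝ)) ≠ 0 := by
        have : (2:ℝ) ≤ (q:ℝ) := by exact_mod_cast hq2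
        linarith
      rw [hρdef]
      rw [div_mul_div_comm, mul_one]
      ring_nf
    calc ∑ q ∈ PP, ρ q = ∑ q ∈ PP, c/(5*L) * (1/(q:ℝ)) := Finset.sum_congr rfl hterm
      _ = c/(5*L) * ∑ q ∈ PP, (1:ℝ)/q := by rw [Finset.mul_sum]
      _ ≤ c/(5*L) * (4.5 * L) := by
          apply mul_le_mul_of_nonneg_left hMsum (by positivity)
      _ = 0.9 * c := by field_simp; ring
  have hcard : (PP.card : ℝ)/N ≤ ν/20 := by
    have h1 : PP.card ≤ M+1 := (Finset.card_filter_le _ _).trans (le_of_eq (Finset.card_range _))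
    have hfloor : (M:ℝ) ≤ (N:ℝ)^θ := Nat.floor_le (Real.rpow_nonneg hN0r.le θ)
    have h2 : ((PP.card : ℝ)) ≤ (N:ℝ)^θ + 1 := by
      have : ((PP.card : ℝ)) ≤ (M:ℝ)+1 := by exact_mod_cast h1
      linarith
    have h3 : (N:ℝ)^θ/N = ((N:ℝ))^(θ-1) := by
      rw [Real.rpow_sub hN0r, Real.rpow_one]
    have h4 : ((N:ℝ))^(θ-1) ≤ ν/40 := (hrpN.trans_le (min_le_left _ _)).le
    calc (PP.card : ℝ)/N ≤ ((N:ℝ)^θ + 1)/N := by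
          apply div_le_div_of_nonneg_right h2 hN0r.le
      _ = (N:ℝ)^θ/N + 1/N := by ring
      _ ≤ ν/40 + ν/40 := by rw [h3]; linarith
      _ = ν/20 := by ring
  have hbound : ∑ q ∈ PP, ρ q + (PP.card : ℝ)/N < ν := by
    calc ∑ q ∈ PP, ρ q + (PP.card : ℝ)/N ≤ 0.9 * c + ν/20 := add_le_add hsumρ hcard
      _ < ν := by nlinarith
  -- filtering
  obtain ⟨F₀, hF₀J, hF₀good, hF₀b⟩ := filterStep ρ hρ0 J.card J le_rfl
  have hQJPP : Qset J ⊆ PP := by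
    intro q hq
    obtain ⟨hpp, n, hn, hd, _⟩ := mem_Qset.1 hq
    exact hPPmem n hn q hpp hd
  have hνF₀ : ν ≤ rsum F₀ := by
    have h1 : ∑ q ∈ Qset J \ Qset F₀, ρ q ≤ ∑ q ∈ PP, ρ q := by
      apply Finset.sum_le_sum_of_subset_of_nonneg
      · exact (Finset.sdiff_subset).trans hQJPP
      · intro q _ _; exact hρ0 q
    have h2 : rsum J - rsum F₀ ≤ 0.9 * c := le_trans hF₀b (h1.trans hsumρ)
    have h3 : α ≤ rsum J := hJα
    nlinarith
  -- trimming
  obtain ⟨E, hEF₀, hEgood, hE3, hE4⟩ :=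
    good_trim ρ ν N J PP hν hN0 hJN hPPmem hρ0 hbound J.card F₀
      (Finset.card_le_card hF₀J) hF₀J hF₀good hνF₀
  refine ⟨E, hEF₀.trans hF₀J, ⟨hE3, hE4⟩, ?_⟩
  intro q hqpp ⟨n, hn, hd⟩
  have hn0 : n ≠ 0 := by
    have : N ≤ n := hJN n (hF₀J (hEF₀ hn))
    omega
  have hqE : q ∈ Qset E := mem_Qset.2 ⟨hqpp, n, hn, hd, hn0⟩
  exact hEgood q hqE
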